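/- Let A and B be bounded self-adjoint operators on a complex Hilbert space such that A − B is compact. Then for every continuous function φ : ℝ → ℂ, the operator φ(A) − φ(B) is compact, where φ(A) and φ(B) are defined by the continuous functional calculus for the self-adjoint operators A and B. -/

import Mathlib

open Polynomial in
lemma aux_pow_compact
    {H : Type*} [NormedAddCommGroup H] [InnerProductSpace ℂ H] [CompleteSpace H]
    (A B : H →L[ℂ] H) (hAB : IsCompactOperator (⇑(A - B))) (n : ℕ) :
    IsCompactOperator (⇑(A ^ n - B ^ n)) := by
  induction n with
  | zero => simpa using isCompactOperator_zero
  | succ n ih =>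
    have key : A ^ (n + 1) - B ^ (n + 1) = A * (A ^ n - B ^ n) + (A - B) * B ^ n := by
      rw [pow_succ' A, pow_succ' B]
      noncomm_ring
    rw [key]
    have h1 : IsCompactOperator (⇑A ∘ ⇑(A ^ n - B ^ n)) := ih.clm_comp A
    have h2 : IsCompactOperator (⇑(A - B) ∘ ⇑(B ^ n)) := hAB.comp_clm (B ^ n)
    have h3 := h1.add h2
    exact h3

open Polynomial in
lemma aux_poly_compact
    {H : Type*} [NormedAddCommGroup H] [InnerProductSpace ℂ H] [CompleteSpace H]
    (A B : H →L[ℂ] H) (hAB : IsCompactOperator (⇑(A - B))) (P : ℂ[X]) :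
    IsCompactOperator (⇑(Polynomial.aeval A P - Polynomial.aeval B P)) := by
  induction P using Polynomial.induction_on' with
  | add p q hp hq =>
    have h3 := hp.add hq
    convert h3 using 1
    · rfl
    funext x
    simp only [map_add, Pi.add_apply, ContinuousLinearMap.sub_apply,
      ContinuousLinearMap.add_apply]
    abel
  | monomial n a =>
    have key : aeval A (monomial n a) - aeval B (monomial n a) = a • (A ^ n - B ^ n) := by
      rw [smul_sub]
      simp [aeval_monomial, Algebra.smul_def]
    rw [key]
    have := (aux_pow_compact A B hAB n).smul a
    exact this

/-- If `A`, `B` are bounded self-adjoint operators on a complex Hilbert space with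
`A - B` compact, then for every continuous `φ : ℝ → ℂ` the operator `φ(A) - φ(B)`
(defined via the continuous functional calculus; only the values of `φ` on the real
spectra matter) is compact. -/
theorem stmt2
    {H : Type*} [NormedAddCommGroup H] [InnerProductSpace ℂ H] [CompleteSpace H]
    (A B : H →L[ℂ] H) (hA : IsSelfAdjoint A) (hB : IsSelfAdjoint B)
    (hAB : IsCompactOperator (⇑(A - B)))
    (φ : ℝ → ℂ) (hφ : Continuous φ) :
    IsCompactOperator
      (⇑(cfc (fun z : ℂ => φ z.re) A - cfc (fun z : ℂ => φ z.re) B)) := by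
  classical
  set f : ℂ → ℂ := fun z => φ z.re with hf_def
  have hf : Continuous f := hφ.comp Complex.continuous_re
  have hAnorm : IsStarNormal A := hA.isStarNormal
  have hBnorm : IsStarNormal B := hB.isStarNormal
  set M : ℝ := max ‖A‖ ‖B‖ with hM
  -- spectra lie in [-M, M] (as reals)
  have hre : ∀ (T : H →L[ℂ] H), IsSelfAdjoint T → ‖T‖ ≤ M →
      ∀ z ∈ spectrum ℂ T, (z.re : ℂ) = z ∧ z.re ∈ Set.Icc (-M) M := by
    intro T hT hTM z hz
    have h1 : (z.re : ℂ) = z := hT.spectrumRestricts.rightInvOn hz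
    refine ⟨h1, ?_⟩
    have h2 : ‖z‖ ≤ ‖T‖ := by
      have ha := spectrum.norm_le_norm_mul_of_mem hz
      have hb : ‖(1 : H →L[ℂ] H)‖ ≤ 1 := by
        rw [ContinuousLinearMap.one_def]; exact ContinuousLinearMap.norm_id_le
      calc ‖z‖ ≤ ‖T‖ * ‖(1 : H →L[ℂ] H)‖ := ha
        _ ≤ ‖T‖ * 1 := mul_le_mul_of_nonneg_left hb (norm_nonneg T)
        _ = ‖T‖ := mul_one _
    have h3 : |z.re| ≤ ‖z‖ := Complex.abs_re_le_norm z
    have : |z.re| ≤ M := h3.trans (h2.trans hTM)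
    exact abs_le.mp this
  -- closedness of compact operators
  have hclosed : IsClosed { T : H →L[ℂ] H | IsCompactOperator ⇑T } :=
    isClosed_setOf_isCompactOperator
  have hmem : (cfc f A - cfc f B) ∈
      closure { T : H →L[ℂ] H | IsCompactOperator ⇑T } := by
    rw [Metric.mem_closure_iff]
    intro ε hε
    set δ : ℝ := ε / 6 with hδ
    have hδpos : 0 < δ := by positivity
    -- approximate real and imaginary parts by polynomials on [-M, M]
    obtain ⟨p, hp⟩ := exists_polynomial_near_of_continuousOn (-M) M (fun x => (φ x).re)
      ((Complex.continuous_re.comp hφ).continuousOn) δ hδpos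
    obtain ⟨q, hq⟩ := exists_polynomial_near_of_continuousOn (-M) M (fun x => (φ x).im)
      ((Complex.continuous_im.comp hφ).continuousOn) δ hδpos
    set P : Polynomial ℂ :=
      p.map (algebraMap ℝ ℂ) + Polynomial.C Complex.I * q.map (algebraMap ℝ ℂ) with hP
    -- key pointwise estimate on the spectra
    have hest : ∀ (T : H →L[ℂ] H), IsSelfAdjoint T → ‖T‖ ≤ M →
        ∀ z ∈ spectrum ℂ T, ‖f z - P.eval z‖ ≤ 2 * δ := by
      intro T hT hTM z hz
      obtain ⟨h1, h2⟩ := hre T hT hTM z hz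
      set x : ℝ := z.re with hx
      have hPz : P.eval z = ((Polynomial.eval x p : ℝ) : ℂ)
          + Complex.I * ((Polynomial.eval x q : ℝ) : ℂ) := by
        rw [← h1]
        simp only [hP, Polynomial.eval_add, Polynomial.eval_mul, Polynomial.eval_C,
          Polynomial.eval_map]
        rw [show ((x : ℂ)) = algebraMap ℝ ℂ x from rfl,
          Polynomial.eval₂_at_apply, Polynomial.eval₂_at_apply]
        rfl
      have hfz : f z = ((φ x).re : ℂ) + Complex.I * ((φ x).im : ℂ) := by
        show φ z.re = _
        rw [show φ z.re = φ x from by rw [hx]]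
        conv_lhs => rw [← Complex.re_add_im (φ x)]
        ring
      have : f z - P.eval z =
          (((φ x).re - p.eval x : ℝ) : ℂ) + Complex.I * (((φ x).im - q.eval x : ℝ) : ℂ) := by
        rw [hfz, hPz]; push_cast; ring
      rw [this]
      calc ‖(((φ x).re - p.eval x : ℝ) : ℂ) + Complex.I * (((φ x).im - q.eval x : ℝ) : ℂ)‖
          ≤ ‖(((φ x).re - p.eval x : ℝ) : ℂ)‖ + ‖Complex.I * (((φ x).im - q.eval x : ℝ) : ℂ)‖ :=
            norm_add_le _ _
        _ ≤ δ + δ := by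
            rw [norm_mul, Complex.norm_I, one_mul, Complex.norm_real, Complex.norm_real]
            gcongr
            · rw [Real.norm_eq_abs, abs_sub_comm]; exact (hp x h2).le
            · rw [Real.norm_eq_abs, abs_sub_comm]; exact (hq x h2).le
        _ = 2 * δ := by ring
    -- the polynomial operator is compact
    refine ⟨Polynomial.aeval A P - Polynomial.aeval B P, aux_poly_compact A B hAB P, ?_⟩
    have hboundA : ‖cfc f A - Polynomial.aeval A P‖ ≤ 2 * δ := by
      rw [← cfc_polynomial P A, ← cfc_sub f P.eval A hf.continuousOn
        (Polynomial.continuous_aeval P).continuousOn]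
      exact norm_cfc_le (by positivity) (hest A hA (le_max_left _ _))
    have hboundB : ‖cfc f B - Polynomial.aeval B P‖ ≤ 2 * δ := by
      rw [← cfc_polynomial P B, ← cfc_sub f P.eval B hf.continuousOn
        (Polynomial.continuous_aeval P).continuousOn]
      exact norm_cfc_le (by positivity) (hest B hB (le_max_right _ _))
    rw [dist_eq_norm]
    have hrw : cfc f A - cfc f B - (Polynomial.aeval A P - Polynomial.aeval B P) =
        (cfc f A - Polynomial.aeval A P) - (cfc f B - Polynomial.aeval B P) := by abel
    calc ‖cfc f A - cfc f B - (Polynomial.aeval A P - Polynomial.aeval B P)‖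
        = ‖(cfc f A - Polynomial.aeval A P) - (cfc f B - Polynomial.aeval B P)‖ := by rw [hrw]
      _ ≤ ‖cfc f A - Polynomial.aeval A P‖ + ‖cfc f B - Polynomial.aeval B P‖ := norm_sub_le _ _
      _ ≤ 2 * δ + 2 * δ := add_le_add hboundA hboundB
      _ < ε := by rw [hδ]; linarith
  have := hclosed.closure_eq ▸ hmem
  exact this
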